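/- Let H be a Hilbert space (e.g. L²([0,T],ℝᵏ)), φ ∈ H a fixed element, Q ∈ H, and define ψ(P) = ⟨φ, P - Q⟩. Suppose ψ is nonnegative on K = {P ∈ H : 0 ≤ P(t) ≤ 1 a.e.} and ψ(Q) = 0 with Q ∈ K. If (λₙ) are nonnegative reals, (Pₙ), (Rₙ), (Sₙ) are sequences in H with Rₙ ≥ 0 and Sₙ ≥ 0 a.e., such that λₙ(Pₙ - Rₙ) → 0 in H, λₙ(Pₙ + Sₙ - 1) → 0 in H, and λₙ(ψ(Pₙ) + αₙ) → l for some αₙ ≥ 0, and moreover φ satisfies the sign conditions: φ ≤ 0 a.e. on {Q = 0}, φ = 0 a.e. on {0 < Q < 1}, φ ≥ 0 a.e. on {Q = 1}, then l ≥ 0. -/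

import Mathlib

open MeasureTheory Filter RealInnerProductSpace
open scoped ENNReal NNReal

section Helpers

variable {α : Type*} {m : MeasurableSpace α} {μ : Measure α}

private lemma memL1_norm_mul {k : ℕ}
    {f g : α → EuclideanSpace ℝ (Fin k)} (hf : MemLp f 2 μ) (hg : MemLp g 2 μ) :
    Integrable (fun t => ‖f t‖ * ‖g t‖) μ := by
  have h1 : (1:ℝ≥0∞)/1 = 1/2 + 1/2 := by
    rw [ENNReal.div_add_div_same, one_add_one_eq_two, ENNReal.div_self two_ne_zero ENNReal.ofNat_ne_top]
    simp
  have := MemLp.smul (𝕜 := ℝ) (r := 1) hg.norm hf.norm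
  exact memLp_one_iff_integrable.mp this

private lemma integrable_inner_of_L2 {k : ℕ}
    {f g : α → EuclideanSpace ℝ (Fin k)} (hf : MemLp f 2 μ) (hg : MemLp g 2 μ) :
    Integrable (fun t => (inner ℝ (f t) (g t) : ℝ)) μ := by
  refine Integrable.mono' (memL1_norm_mul hf hg) (hf.1.inner hg.1) ?_
  exact ae_of_all _ fun t => by
    simpa [Real.norm_eq_abs] using abs_real_inner_le_norm (f t) (g t)

private lemma abs_integral_inner_le {k : ℕ}
    {f g : α → EuclideanSpace ℝ (Fin k)} (hf : MemLp f 2 μ) (hg : MemLp g 2 μ) :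
    |∫ t, (inner ℝ (f t) (g t) : ℝ) ∂μ| ≤ (eLpNorm f 2 μ).toReal * (eLpNorm g 2 μ).toReal := by
  have hpq : Real.HolderConjugate 2 2 := Real.HolderConjugate.two_two
  have h2 : (ENNReal.ofReal (2:ℝ)) = 2 := by norm_num
  have hf2 : MemLp f (ENNReal.ofReal (2:ℝ)) μ := by rw [h2]; exact hf
  have hg2 : MemLp g (ENNReal.ofReal (2:ℝ)) μ := by rw [h2]; exact hg
  have hCS := integral_mul_norm_le_Lp_mul_Lq hpq hf2 hg2
  have h1 : |∫ t, (inner ℝ (f t) (g t) : ℝ) ∂μ| ≤ ∫ t, ‖f t‖ * ‖g t‖ ∂μ := by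
    refine le_trans ?_ (integral_mono (integrable_inner_of_L2 hf hg).abs
      (memL1_norm_mul hf hg) (fun t => abs_real_inner_le_norm (f t) (g t)))
    simpa [Real.norm_eq_abs] using
      norm_integral_le_integral_norm (fun t => (inner ℝ (f t) (g t) : ℝ)) (μ := μ)
  have hfe : (eLpNorm f 2 μ).toReal = (∫ t, ‖f t‖ ^ (2:ℝ) ∂μ) ^ ((2:ℝ))⁻¹ := by
    rw [hf.eLpNorm_eq_integral_rpow_norm two_ne_zero ENNReal.ofNat_ne_top]
    rw [ENNReal.toReal_ofReal (by positivity)]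
    norm_num
  have hge : (eLpNorm g 2 μ).toReal = (∫ t, ‖g t‖ ^ (2:ℝ) ∂μ) ^ ((2:ℝ))⁻¹ := by
    rw [hg.eLpNorm_eq_integral_rpow_norm two_ne_zero ENNReal.ofNat_ne_top]
    rw [ENNReal.toReal_ofReal (by positivity)]
    norm_num
  rw [hfe, hge]
  refine h1.trans (le_of_eq_of_le ?_ (le_of_le_of_eq hCS ?_) )
  · rfl
  · norm_num

private lemma clamp_bound {x r s : ℝ} (hr : 0 ≤ r) (hs : 0 ≤ s) :
    |x - max 0 (min 1 x)| ≤ |x - r| + |x + s - 1| := by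
  rcases le_total x 0 with h | h
  · rw [min_eq_right (h.trans zero_le_one), max_eq_left h, sub_zero, abs_of_nonpos h]
    have h1 : r - x ≤ |x - r| := by rw [abs_sub_comm]; exact le_abs_self _
    have h2 : (0:ℝ) ≤ |x + s - 1| := abs_nonneg _
    linarith
  · rcases le_total x 1 with h' | h'
    · rw [min_eq_right h', max_eq_right h, sub_self, abs_zero]
      positivity
    · rw [min_eq_left h', max_eq_right zero_le_one, abs_of_nonneg (by linarith)]
      have h1 : x + s - 1 ≤ |x + s - 1| := le_abs_self _
      have h2 : (0:ℝ) ≤ |x - r| := abs_nonneg _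
      linarith

private lemma euclid_norm_le {k : ℕ} (a b c : EuclideanSpace ℝ (Fin k))
    (h : ∀ i, |a i| ≤ |b i| + |c i|) : ‖a‖ ≤ ‖b‖ + ‖c‖ := by
  set bb : EuclideanSpace ℝ (Fin k) := (WithLp.equiv 2 (Fin k → ℝ)).symm (fun i => |b i|) with hbb
  set cc : EuclideanSpace ℝ (Fin k) := (WithLp.equiv 2 (Fin k → ℝ)).symm (fun i => |c i|) with hcc
  have hbbi : ∀ i, bb i = |b i| := fun i => rfl
  have hcci : ∀ i, cc i = |c i| := fun i => rfl
  have hd : ‖a‖ ≤ ‖bb + cc‖ := by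
    rw [EuclideanSpace.norm_eq, EuclideanSpace.norm_eq]
    apply Real.sqrt_le_sqrt
    apply Finset.sum_le_sum
    intro i _
    have hi : (bb + cc) i = |b i| + |c i| := rfl
    rw [Real.norm_eq_abs, Real.norm_eq_abs, hi]
    have h1 : |a i| ≤ |(|b i| + |c i|)| := (h i).trans (le_abs_self _)
    exact pow_le_pow_left₀ (abs_nonneg _) h1 2
  refine hd.trans ((norm_add_le _ _).trans ?_)
  have h1 : ‖bb‖ = ‖b‖ := by
    rw [EuclideanSpace.norm_eq, EuclideanSpace.norm_eq]
    congr 1; apply Finset.sum_congr rfl; intro i _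
    rw [hbbi i, Real.norm_eq_abs, Real.norm_eq_abs, abs_abs]
  have h2 : ‖cc‖ = ‖c‖ := by
    rw [EuclideanSpace.norm_eq, EuclideanSpace.norm_eq]
    congr 1; apply Finset.sum_congr rfl; intro i _
    rw [hcci i, Real.norm_eq_abs, Real.norm_eq_abs, abs_abs]
  rw [h1, h2]

end Helpers

/-- Verification of Assumption S for the dynamic vaccination game. -/
theorem assumption_S_vaccination {T : ℝ} (hT : 0 < T) (k : ℕ) (hk : 0 < k)
    (φ Q : ℝ → EuclideanSpace ℝ (Fin k))
    (μ : Measure ℝ) (hμ : μ = volume.restrict (Set.Icc 0 T))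
    (hφ : MemLp φ 2 μ) (hQ : MemLp Q 2 μ)
    (hQbox : ∀ i, ∀ᵐ t ∂μ, Q t i ∈ Set.Icc (0:ℝ) 1)
    -- ψ(P) = ⟨φ, P - Q⟩, nonnegative on K and vanishing at Q
    (ψ : (ℝ → EuclideanSpace ℝ (Fin k)) → ℝ)
    (hψ : ∀ P, ψ P = ∫ t, (inner ℝ (φ t) (P t - Q t) : ℝ) ∂μ)
    (hψK : ∀ P : ℝ → EuclideanSpace ℝ (Fin k), MemLp P 2 μ → (∀ i, ∀ᵐ t ∂μ, P t i ∈ Set.Icc (0:ℝ) 1) → 0 ≤ ψ P)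
    -- sign conditions on φ relative to the level sets of Q
    (hsign : ∀ i, ∀ᵐ t ∂μ,
      (Q t i = 0 → φ t i ≤ 0) ∧
      (0 < Q t i → Q t i < 1 → φ t i = 0) ∧
      (Q t i = 1 → 0 ≤ φ t i))
    -- the sequences appearing in the tangent cone condition
    (lam : ℕ → ℝ) (hlam : ∀ n, 0 ≤ lam n)
    (P R S : ℕ → ℝ → EuclideanSpace ℝ (Fin k))
    (hP : ∀ n, MemLp (P n) 2 μ) (hR : ∀ n, MemLp (R n) 2 μ) (hS : ∀ n, MemLp (S n) 2 μ)
    (hRpos : ∀ n, ∀ i, ∀ᵐ t ∂μ, 0 ≤ R n t i)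
    (hSpos : ∀ n, ∀ i, ∀ᵐ t ∂μ, 0 ≤ S n t i)
    (α : ℕ → ℝ) (hα : ∀ n, 0 ≤ α n)
    (hconv1 : Tendsto (fun n => eLpNorm (fun t => lam n • (P n t - R n t)) 2 μ)
      atTop (nhds 0))
    (hconv2 : Tendsto (fun n => eLpNorm
      (fun t => lam n • (P n t + S n t - (WithLp.equiv 2 (Fin k → ℝ)).symm 1)) 2 μ)
      atTop (nhds 0))
    (l : ℝ)
    (hconv3 : Tendsto (fun n => lam n * (ψ (P n) + α n)) atTop (nhds l)) :
    0 ≤ l := by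
  haveI : IsFiniteMeasure μ := by
    rw [hμ]; constructor
    rw [Measure.restrict_apply_univ, Real.volume_Icc]
    exact ENNReal.ofReal_lt_top
  set c1 : EuclideanSpace ℝ (Fin k) := (WithLp.equiv 2 (Fin k → ℝ)).symm 1 with hc1def
  -- the clamped (projected) sequence, which lies in the box K
  set P' : ℕ → ℝ → EuclideanSpace ℝ (Fin k) :=
    fun n t => (WithLp.equiv 2 (Fin k → ℝ)).symm (fun i => max 0 (min 1 (P n t i))) with hP'def
  have hP'i : ∀ n t i, P' n t i = max 0 (min 1 (P n t i)) := fun n t i => rfl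
  have hP'mem : ∀ n, MemLp (P' n) 2 μ := by
    intro n
    have hc : Continuous (fun v : EuclideanSpace ℝ (Fin k) =>
        ((WithLp.equiv 2 (Fin k → ℝ)).symm (fun i => max 0 (min 1 (v i))) :
          EuclideanSpace ℝ (Fin k))) := by
      have hc2 : Continuous (fun w : Fin k → ℝ =>
          ((WithLp.equiv 2 (Fin k → ℝ)).symm (fun i => max 0 (min 1 (w i))) :
            EuclideanSpace ℝ (Fin k))) := by
        refine Continuous.comp (PiLp.continuous_toLp 2 (fun _ : Fin k => ℝ)) ?_
        exact continuous_pi fun i => continuous_const.max (continuous_const.min (continuous_apply i))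
      exact hc2.comp (PiLp.continuous_ofLp 2 (fun _ : Fin k => ℝ))
    have hmeas : AEStronglyMeasurable (P' n) μ := hc.comp_aestronglyMeasurable (hP n).1
    refine MemLp.of_bound hmeas (Real.sqrt k) (ae_of_all _ fun t => ?_)
    rw [EuclideanSpace.norm_eq]
    refine Real.sqrt_le_sqrt ?_
    calc (∑ i, ‖P' n t i‖ ^ 2) ≤ ∑ _i : Fin k, (1:ℝ) := by
          refine Finset.sum_le_sum fun i _ => ?_
          have h0 : (0:ℝ) ≤ P' n t i := le_max_left _ _
          have h1 : P' n t i ≤ 1 := max_le zero_le_one (min_le_left _ _)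
          rw [Real.norm_eq_abs, abs_of_nonneg h0]
          nlinarith
      _ = (k:ℝ) := by simp
  have hψP' : ∀ n, 0 ≤ ψ (P' n) := fun n => hψK _ (hP'mem n)
    (fun i => ae_of_all _ fun t => ⟨le_max_left _ _, max_le zero_le_one (min_le_left _ _)⟩)
  have hc1mem : MemLp (fun _ : ℝ => c1) 2 μ := memLp_const _
  have hg : ∀ n, MemLp (fun t => lam n • (P n t - R n t)) 2 μ :=
    fun n => ((hP n).sub (hR n)).const_smul (lam n)
  have hh : ∀ n, MemLp (fun t => lam n • (P n t + S n t - c1)) 2 μ :=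
    fun n => (((hP n).add (hS n)).sub hc1mem).const_smul (lam n)
  have hD : ∀ n, MemLp (fun t => lam n • (P n t - P' n t)) 2 μ :=
    fun n => ((hP n).sub (hP'mem n)).const_smul (lam n)
  -- the key eLpNorm bound via the pointwise clamp estimate
  have hDle : ∀ n, eLpNorm (fun t => lam n • (P n t - P' n t)) 2 μ ≤
      eLpNorm (fun t => lam n • (P n t - R n t)) 2 μ +
      eLpNorm (fun t => lam n • (P n t + S n t - c1)) 2 μ := by
    intro n
    have hae : ∀ᵐ t ∂μ, ‖lam n • (P n t - P' n t)‖ ≤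
        ‖(‖lam n • (P n t - R n t)‖ + ‖lam n • (P n t + S n t - c1)‖ : ℝ)‖ := by
      filter_upwards [ae_all_iff.mpr (hRpos n), ae_all_iff.mpr (hSpos n)] with t htR htS
      have hcomp : ∀ i, |(P n t - P' n t) i| ≤ |(P n t - R n t) i| + |(P n t + S n t - c1) i| := by
        intro i
        have e1 : (P n t - P' n t) i = P n t i - max 0 (min 1 (P n t i)) := rfl
        have e2 : (P n t - R n t) i = P n t i - R n t i := rfl
        have e3 : (P n t + S n t - c1) i = P n t i + S n t i - 1 := rfl
        rw [e1, e2, e3]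
        exact clamp_bound (htR i) (htS i)
      have hnorm := euclid_norm_le _ _ _ hcomp
      rw [Real.norm_eq_abs, abs_of_nonneg (by positivity)]
      rw [norm_smul, norm_smul, norm_smul]
      simp only [Real.norm_eq_abs, abs_of_nonneg (hlam n)]
      rw [← mul_add]
      exact mul_le_mul_of_nonneg_left hnorm (hlam n)
    calc eLpNorm (fun t => lam n • (P n t - P' n t)) 2 μ
        ≤ eLpNorm (fun t => (‖lam n • (P n t - R n t)‖ + ‖lam n • (P n t + S n t - c1)‖ : ℝ)) 2 μ :=
          eLpNorm_mono_ae hae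
      _ ≤ eLpNorm (fun t => ‖lam n • (P n t - R n t)‖) 2 μ +
          eLpNorm (fun t => ‖lam n • (P n t + S n t - c1)‖) 2 μ :=
          eLpNorm_add_le (hg n).1.norm (hh n).1.norm one_le_two
      _ = _ := by rw [eLpNorm_norm, eLpNorm_norm]
  -- splitting ψ(P n) through the projection
  have hI1 : ∀ n, Integrable (fun t => (inner ℝ (φ t) (P' n t - Q t) : ℝ)) μ :=
    fun n => integrable_inner_of_L2 hφ ((hP'mem n).sub hQ)
  have hI2 : ∀ n, Integrable (fun t => (inner ℝ (φ t) (P n t - P' n t) : ℝ)) μ :=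
    fun n => integrable_inner_of_L2 hφ ((hP n).sub (hP'mem n))
  have hsplit : ∀ n, ψ (P n) = ψ (P' n) + ∫ t, (inner ℝ (φ t) (P n t - P' n t) : ℝ) ∂μ := by
    intro n
    rw [hψ, hψ, ← integral_add (hI1 n) (hI2 n)]
    refine integral_congr_ae (ae_of_all _ fun t => ?_)
    show (inner ℝ (φ t) (P n t - Q t) : ℝ) =
      (inner ℝ (φ t) (P' n t - Q t) : ℝ) + (inner ℝ (φ t) (P n t - P' n t) : ℝ)
    rw [← inner_add_right]
    congr 1
    abel
  -- the key lower bound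
  have key : ∀ n, -((eLpNorm φ 2 μ).toReal *
      ((eLpNorm (fun t => lam n • (P n t - R n t)) 2 μ).toReal +
       (eLpNorm (fun t => lam n • (P n t + S n t - c1)) 2 μ).toReal)) ≤
      lam n * (ψ (P n) + α n) := by
    intro n
    have step1 : lam n * ψ (P n) ≤ lam n * (ψ (P n) + α n) :=
      mul_le_mul_of_nonneg_left (le_add_of_nonneg_right (hα n)) (hlam n)
    have step2 : lam n * ψ (P n) = lam n * ψ (P' n) +
        ∫ t, (inner ℝ (φ t) (lam n • (P n t - P' n t)) : ℝ) ∂μ := by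
      rw [hsplit n, mul_add]
      congr 1
      rw [← integral_const_mul]
      refine integral_congr_ae (ae_of_all _ fun t => ?_)
      show lam n * (inner ℝ (φ t) (P n t - P' n t) : ℝ) =
        (inner ℝ (φ t) (lam n • (P n t - P' n t)) : ℝ)
      rw [real_inner_smul_right]
    have step3 : -((eLpNorm φ 2 μ).toReal *
        (eLpNorm (fun t => lam n • (P n t - P' n t)) 2 μ).toReal) ≤
        ∫ t, (inner ℝ (φ t) (lam n • (P n t - P' n t)) : ℝ) ∂μ := by
      have h1 := abs_integral_inner_le hφ (hD n)
      have h2 := neg_abs_le (∫ t, (inner ℝ (φ t) (lam n • (P n t - P' n t)) : ℝ) ∂μ)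
      linarith
    have step4 : (eLpNorm (fun t => lam n • (P n t - P' n t)) 2 μ).toReal ≤
        (eLpNorm (fun t => lam n • (P n t - R n t)) 2 μ).toReal +
        (eLpNorm (fun t => lam n • (P n t + S n t - c1)) 2 μ).toReal := by
      rw [← ENNReal.toReal_add (hg n).eLpNorm_ne_top (hh n).eLpNorm_ne_top]
      exact ENNReal.toReal_mono
        (ENNReal.add_ne_top.mpr ⟨(hg n).eLpNorm_ne_top, (hh n).eLpNorm_ne_top⟩) (hDle n)
    have hφ0 : 0 ≤ (eLpNorm φ 2 μ).toReal := ENNReal.toReal_nonneg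
    have h5 : 0 ≤ lam n * ψ (P' n) := mul_nonneg (hlam n) (hψP' n)
    linarith [mul_le_mul_of_nonneg_left step4 hφ0]
  -- pass to the limit
  have hgt : Tendsto (fun n => (eLpNorm (fun t => lam n • (P n t - R n t)) 2 μ).toReal)
      atTop (nhds 0) := by
    have := (ENNReal.tendsto_toReal (a := 0) (by simp)).comp hconv1
    exact this
  have hht : Tendsto (fun n => (eLpNorm (fun t => lam n • (P n t + S n t - c1)) 2 μ).toReal)
      atTop (nhds 0) := by
    have := (ENNReal.tendsto_toReal (a := 0) (by simp)).comp hconv2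
    exact this
  have hlim : Tendsto (fun n => -((eLpNorm φ 2 μ).toReal *
      ((eLpNorm (fun t => lam n • (P n t - R n t)) 2 μ).toReal +
       (eLpNorm (fun t => lam n • (P n t + S n t - c1)) 2 μ).toReal))) atTop (nhds 0) := by
    have := (((hgt.add hht).const_mul ((eLpNorm φ 2 μ).toReal)).neg)
    simpa using this
  exact le_of_tendsto_of_tendsto' hlim hconv3 key
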